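/- arXiv:2111.01848 — 3 statements merged into one kernel-verified Lean document; each statement's English description precedes it below -/
import Mathlib

section
/- Let A be a real n×d matrix of full column rank, 1 ≤ q ≤ 2, and c ∈ ℝ^n nonnegative. Let w ∈ ℝ^n be nonnegative with c + w entrywise positive and satisfying the fixed-point equation w_i = σ((C+W)^{1/2−1/q}A)_i for all i, where C = diag(c) and W = diag(w). Let u ∈ ℝ^n be nonnegative with c + u entrywise positive, let ν ≥ 1 satisfy ν^{−1}(c_i + w_i) ≤ c_i + u_i ≤ ν(c_i + w_i) for all i, and let σ̃ ∈ ℝ^n satisfy (50/51)·σ((C+U)^{1/2−1/q}A)_i ≤ σ̃_i ≤ (51/50)·σ((C+U)^{1/2−1/q}A)_i for all i, where U = diag(u). Define u^new ∈ ℝ^n by u^new_i = ( (c_i+u_i)^{2/q−1}σ̃_i + (c_i+u_i)^{2/q−1}c_i )^{q/2} − c_i. Then, with μ = (51/50)^{q/2}·ν^{1−q/2}, for all i: μ^{−1}(c_i + w_i) ≤ c_i + u^new_i ≤ μ(c_i + w_i). -/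
open Matrix

/-- Leverage score of row `i` of matrix `M`: `σ(M)_i = m_i^⊤ (M^⊤ M)⁻¹ m_i`. -/
noncomputable def levScore {n d : ℕ} (M : Matrix (Fin n) (Fin d) ℝ) (i : Fin n) : ℝ :=
  M i ⬝ᵥ ((Mᵀ * M)⁻¹ *ᵥ M i)

lemma aux_inj {n d : ℕ} (A : Matrix (Fin n) (Fin d) ℝ) (hA : A.rank = d)
    {v : Fin d → ℝ} (hv : v ≠ 0) : A *ᵥ v ≠ 0 := by
  have hker : LinearMap.ker A.mulVecLin = ⊥ := by
    have h1 := A.mulVecLin.finrank_range_add_finrank_ker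
    rw [Matrix.rank] at hA
    simp only [hA, Module.finrank_pi, Fintype.card_fin] at h1
    have h2 : Module.finrank ℝ (LinearMap.ker A.mulVecLin) = 0 := by omega
    exact Submodule.finrank_eq_zero.mp h2
  have := (LinearMap.ker_eq_bot (f := A.mulVecLin)).mp hker
  intro h
  exact hv (this (by simpa using h))

lemma aux_quadform {n d : ℕ} (A : Matrix (Fin n) (Fin d) ℝ) (dg : Fin n → ℝ) (v : Fin d → ℝ) :
    v ⬝ᵥ ((Aᵀ * Matrix.diagonal dg * A) *ᵥ v) = ∑ j, dg j * (A *ᵥ v) j ^ 2 := by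
  rw [← mulVec_mulVec, ← mulVec_mulVec, dotProduct_mulVec, vecMul_transpose]
  simp only [dotProduct, mulVec_diagonal]
  exact Finset.sum_congr rfl fun j _ => by ring

lemma aux_posdef {n d : ℕ} (A : Matrix (Fin n) (Fin d) ℝ) (hA : A.rank = d)
    (dg : Fin n → ℝ) (hdg : ∀ j, 0 < dg j) : (Aᵀ * Matrix.diagonal dg * A).PosDef := by
  rw [posDef_iff_dotProduct_mulVec]
  constructor
  · rw [Matrix.IsHermitian, conjTranspose_eq_transpose_of_trivial]
    rw [Matrix.transpose_mul, Matrix.transpose_mul, Matrix.transpose_transpose,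
      Matrix.diagonal_transpose, Matrix.mul_assoc]
  · intro x hx
    have hx' : A *ᵥ x ≠ 0 := aux_inj A hA hx
    obtain ⟨j, hj⟩ : ∃ j, (A *ᵥ x) j ≠ 0 := by
      by_contra h
      push_neg at h
      exact hx' (funext h)
    have : (0:ℝ) < ∑ j, dg j * (A *ᵥ x) j ^ 2 := by
      apply Finset.sum_pos' (fun k _ => mul_nonneg (hdg k).le (sq_nonneg _))
      exact ⟨j, Finset.mem_univ j, mul_pos (hdg j) (lt_of_le_of_ne (sq_nonneg _) (Ne.symm (pow_ne_zero 2 hj)))⟩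
    simpa [star, aux_quadform A dg x] using this

lemma aux_key {d : ℕ} {P Q : Matrix (Fin d) (Fin d) ℝ} (hP : P.PosDef) (hQ : Q.PosDef)
    {γ : ℝ} (hγ : 0 < γ) (h : ∀ v, v ⬝ᵥ (P *ᵥ v) ≤ γ * (v ⬝ᵥ (Q *ᵥ v))) (x : Fin d → ℝ) :
    γ⁻¹ * (x ⬝ᵥ (Q⁻¹ *ᵥ x)) ≤ x ⬝ᵥ (P⁻¹ *ᵥ x) := by
  set b : Fin d → ℝ := γ⁻¹ • (Q⁻¹ *ᵥ x) with hb
  set p : Fin d → ℝ := P⁻¹ *ᵥ x with hp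
  have hQx : Q *ᵥ (Q⁻¹ *ᵥ x) = x := by
    rw [mulVec_mulVec, Matrix.mul_nonsing_inv _ hQ.det_pos.ne'.isUnit, one_mulVec]
  have hPp : P *ᵥ p = x := by
    rw [hp, mulVec_mulVec, Matrix.mul_nonsing_inv _ hP.det_pos.ne'.isUnit, one_mulVec]
  have hQb : Q *ᵥ b = γ⁻¹ • x := by rw [hb, mulVec_smul, hQx]
  have hxb : x ⬝ᵥ b = γ⁻¹ * (x ⬝ᵥ (Q⁻¹ *ᵥ x)) := by
    rw [hb, dotProduct_smul]; simp
  have hbx : b ⬝ᵥ x = x ⬝ᵥ b := dotProduct_comm _ _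
  have hbQb : b ⬝ᵥ (Q *ᵥ b) = γ⁻¹ * (b ⬝ᵥ x) := by
    rw [hQb, dotProduct_smul]; simp
  have h1 : b ⬝ᵥ (P *ᵥ b) ≤ b ⬝ᵥ x := by
    have := h b
    rw [hbQb] at this
    calc b ⬝ᵥ (P *ᵥ b) ≤ γ * (γ⁻¹ * (b ⬝ᵥ x)) := this
      _ = b ⬝ᵥ x := by field_simp
  have hsym : p ⬝ᵥ (P *ᵥ b) = b ⬝ᵥ (P *ᵥ p) := by
    rw [dotProduct_mulVec p P b, ← mulVec_transpose]
    have hPt : Pᵀ = P := by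
      have := hP.isHermitian
      rwa [Matrix.IsHermitian, conjTranspose_eq_transpose_of_trivial] at this
    rw [hPt, dotProduct_comm]
  have h2 : 0 ≤ (p - b) ⬝ᵥ (P *ᵥ (p - b)) := by
    have := hP.posSemidef.dotProduct_mulVec_nonneg (p - b)
    rwa [star_trivial] at this
  have hexp : (p - b) ⬝ᵥ (P *ᵥ (p - b))
      = p ⬝ᵥ (P *ᵥ p) - p ⬝ᵥ (P *ᵥ b) - b ⬝ᵥ (P *ᵥ p) + b ⬝ᵥ (P *ᵥ b) := by
    rw [mulVec_sub, sub_dotProduct, dotProduct_sub, dotProduct_sub]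
    ring
  have hpPp : p ⬝ᵥ (P *ᵥ p) = p ⬝ᵥ x := by rw [hPp]
  have hbPp : b ⬝ᵥ (P *ᵥ p) = b ⬝ᵥ x := by rw [hPp]
  have hxp : x ⬝ᵥ p = p ⬝ᵥ x := dotProduct_comm _ _
  rw [← hxb]
  rw [hexp, hsym, hpPp, hbPp] at h2
  linarith

lemma aux_lev {n d : ℕ} (A : Matrix (Fin n) (Fin d) ℝ) (s : Fin n → ℝ) (i : Fin n) :
    levScore (Matrix.diagonal s * A) i
      = (s i * s i) * (A i ⬝ᵥ ((Aᵀ * Matrix.diagonal (fun j => s j * s j) * A)⁻¹ *ᵥ A i)) := by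
  have h1 : (Matrix.diagonal s * A)ᵀ * (Matrix.diagonal s * A)
      = Aᵀ * Matrix.diagonal (fun j => s j * s j) * A := by
    rw [Matrix.transpose_mul, Matrix.diagonal_transpose, Matrix.mul_assoc,
      ← Matrix.mul_assoc (Matrix.diagonal s), Matrix.diagonal_mul_diagonal,
      ← Matrix.mul_assoc]
  have h2 : (Matrix.diagonal s * A) i = s i • A i := by
    ext j; simp [Matrix.diagonal_mul]
  rw [levScore, h1, h2, mulVec_smul, dotProduct_smul, smul_dotProduct]
  simp [smul_eq_mul]; ring

lemma aux_lev3 {n d : ℕ} (A : Matrix (Fin n) (Fin d) ℝ) (x : Fin n → ℝ)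
    (hx : ∀ j, 0 < x j) (e r : ℝ) (hr : e + e = r) (i : Fin n) :
    levScore (Matrix.diagonal (fun j => x j ^ e) * A) i
      = x i ^ r * (A i ⬝ᵥ ((Aᵀ * Matrix.diagonal (fun j => x j ^ r) * A)⁻¹ *ᵥ A i)) := by
  subst hr
  have hfun : (fun j => x j ^ e * x j ^ e) = (fun j => x j ^ (e + e)) :=
    funext fun j => (Real.rpow_add (hx j) e e).symm
  rw [aux_lev A (fun j => x j ^ e) i]
  rw [hfun, ← Real.rpow_add (hx i)]

theorem stmt17 {n d : ℕ} (A : Matrix (Fin n) (Fin d) ℝ) (hA : A.rank = d)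
    (q : ℝ) (hq1 : 1 ≤ q) (hq2 : q ≤ 2)
    (c : Fin n → ℝ) (hc : ∀ i, 0 ≤ c i)
    (w : Fin n → ℝ) (hw0 : ∀ i, 0 ≤ w i) (hcw : ∀ i, 0 < c i + w i)
    (hfix : ∀ i, w i =
      levScore (Matrix.diagonal (fun j => (c j + w j) ^ ((1:ℝ)/2 - 1/q)) * A) i)
    (u : Fin n → ℝ) (hu0 : ∀ i, 0 ≤ u i) (hcu : ∀ i, 0 < c i + u i)
    (ν : ℝ) (hν : 1 ≤ ν)
    (happrox : ∀ i, ν⁻¹ * (c i + w i) ≤ c i + u i ∧ c i + u i ≤ ν * (c i + w i))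
    (σt : Fin n → ℝ)
    (hσt : ∀ i,
      (50/51 : ℝ) * levScore (Matrix.diagonal (fun j => (c j + u j) ^ ((1:ℝ)/2 - 1/q)) * A) i
        ≤ σt i ∧
      σt i ≤
        (51/50 : ℝ) * levScore (Matrix.diagonal (fun j => (c j + u j) ^ ((1:ℝ)/2 - 1/q)) * A) i)
    (unew : Fin n → ℝ)
    (hunew : ∀ i, unew i =
      ((c i + u i) ^ (2/q - 1) * σt i + (c i + u i) ^ (2/q - 1) * c i) ^ (q/2) - c i)
    (μ : ℝ) (hμ : μ = (51/50 : ℝ) ^ (q/2) * ν ^ (1 - q/2)) :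
    ∀ i, μ⁻¹ * (c i + w i) ≤ c i + unew i ∧ c i + unew i ≤ μ * (c i + w i) := by
  intro i
  have hq0 : (0:ℝ) < q := by linarith
  set t : ℝ := 2/q - 1 with ht
  have ht0 : 0 ≤ t := by
    have h1 : 1 ≤ 2/q := (one_le_div hq0).mpr hq2
    rw [ht]; linarith
  have he : (1:ℝ)/2 - 1/q + ((1:ℝ)/2 - 1/q) = -t := by rw [ht]; ring
  have hν0 : (0:ℝ) < ν := by linarith
  set γ : ℝ := ν ^ t with hγdef
  have hγ0 : 0 < γ := Real.rpow_pos_of_pos hν0 t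
  set dw : Fin n → ℝ := fun j => (c j + w j) ^ (-t) with hdw
  set du : Fin n → ℝ := fun j => (c j + u j) ^ (-t) with hdu
  have hdwpos : ∀ j, 0 < dw j := fun j => Real.rpow_pos_of_pos (hcw j) _
  have hdupos : ∀ j, 0 < du j := fun j => Real.rpow_pos_of_pos (hcu j) _
  set Mw : Matrix (Fin d) (Fin d) ℝ := Aᵀ * Matrix.diagonal dw * A with hMwdef
  set Mu : Matrix (Fin d) (Fin d) ℝ := Aᵀ * Matrix.diagonal du * A with hMudef
  have hMw : Mw.PosDef := aux_posdef A hA dw hdwpos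
  have hMu : Mu.PosDef := aux_posdef A hA du hdupos
  set f : ℝ := A i ⬝ᵥ (Mw⁻¹ *ᵥ A i) with hfdef
  set g : ℝ := A i ⬝ᵥ (Mu⁻¹ *ᵥ A i) with hgdef
  -- leverage score rewrites
  have hlevw : levScore (Matrix.diagonal (fun j => (c j + w j) ^ ((1:ℝ)/2 - 1/q)) * A) i
      = dw i * f := by
    rw [aux_lev3 A (fun j => c j + w j) hcw ((1:ℝ)/2 - 1/q) (-t) he i]
  have hlevu : levScore (Matrix.diagonal (fun j => (c j + u j) ^ ((1:ℝ)/2 - 1/q)) * A) i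
      = du i * g := by
    rw [aux_lev3 A (fun j => c j + u j) hcu ((1:ℝ)/2 - 1/q) (-t) he i]
  have hdwi : dw i = ((c i + w i) ^ t)⁻¹ := by rw [hdw]; exact Real.rpow_neg (hcw i).le t
  have hdui : du i = ((c i + u i) ^ t)⁻¹ := by rw [hdu]; exact Real.rpow_neg (hcu i).le t
  have hlwt : (0:ℝ) < (c i + w i) ^ t := Real.rpow_pos_of_pos (hcw i) t
  have hlut : (0:ℝ) < (c i + u i) ^ t := Real.rpow_pos_of_pos (hcu i) t
  have hfval : f = (c i + w i) ^ t * w i := by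
    have h := hfix i
    rw [hlevw, hdwi] at h
    field_simp at h
    linarith
  -- entrywise comparison of the diagonal weights
  have hcomp1 : ∀ j, du j ≤ γ * dw j := by
    intro j
    have h1 : ν⁻¹ * (c j + w j) ≤ c j + u j := (happrox j).1
    have h2 : (c j + u j) ^ (-t) ≤ (ν⁻¹ * (c j + w j)) ^ (-t) :=
      Real.rpow_le_rpow_of_nonpos (mul_pos (inv_pos.mpr hν0) (hcw j)) h1 (neg_nonpos.mpr ht0)
    have h3 : (ν⁻¹ * (c j + w j)) ^ (-t) = γ * dw j := by
      rw [Real.mul_rpow (inv_nonneg.mpr hν0.le) (hcw j).le, Real.inv_rpow hν0.le,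
        Real.rpow_neg hν0.le, inv_inv, hγdef, hdw]
    rw [hdu]
    calc (c j + u j) ^ (-t) ≤ (ν⁻¹ * (c j + w j)) ^ (-t) := h2
      _ = γ * dw j := h3
  have hcomp2 : ∀ j, dw j ≤ γ * du j := by
    intro j
    have h1 : ν⁻¹ * (c j + u j) ≤ c j + w j := by
      have := mul_le_mul_of_nonneg_left (happrox j).2 (inv_nonneg.mpr hν0.le)
      rwa [← mul_assoc, inv_mul_cancel₀ hν0.ne', one_mul] at this
    have h2 : (c j + w j) ^ (-t) ≤ (ν⁻¹ * (c j + u j)) ^ (-t) :=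
      Real.rpow_le_rpow_of_nonpos (mul_pos (inv_pos.mpr hν0) (hcu j)) h1 (neg_nonpos.mpr ht0)
    have h3 : (ν⁻¹ * (c j + u j)) ^ (-t) = γ * du j := by
      rw [Real.mul_rpow (inv_nonneg.mpr hν0.le) (hcu j).le, Real.inv_rpow hν0.le,
        Real.rpow_neg hν0.le, inv_inv, hγdef, hdu]
    rw [hdw]
    calc (c j + w j) ^ (-t) ≤ (ν⁻¹ * (c j + u j)) ^ (-t) := h2
      _ = γ * du j := h3
  -- quadratic form comparisons
  have hquad1 : ∀ v, v ⬝ᵥ (Mu *ᵥ v) ≤ γ * (v ⬝ᵥ (Mw *ᵥ v)) := by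
    intro v
    rw [hMudef, hMwdef, aux_quadform, aux_quadform, Finset.mul_sum]
    apply Finset.sum_le_sum
    intro j _
    calc du j * (A *ᵥ v) j ^ 2 ≤ (γ * dw j) * (A *ᵥ v) j ^ 2 :=
          mul_le_mul_of_nonneg_right (hcomp1 j) (sq_nonneg _)
      _ = γ * (dw j * (A *ᵥ v) j ^ 2) := by ring
  have hquad2 : ∀ v, v ⬝ᵥ (Mw *ᵥ v) ≤ γ * (v ⬝ᵥ (Mu *ᵥ v)) := by
    intro v
    rw [hMudef, hMwdef, aux_quadform, aux_quadform, Finset.mul_sum]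
    apply Finset.sum_le_sum
    intro j _
    calc dw j * (A *ᵥ v) j ^ 2 ≤ (γ * du j) * (A *ᵥ v) j ^ 2 :=
          mul_le_mul_of_nonneg_right (hcomp2 j) (sq_nonneg _)
      _ = γ * (du j * (A *ᵥ v) j ^ 2) := by ring
  have hkey1 : γ⁻¹ * g ≤ f := aux_key hMw hMu hγ0 hquad2 (A i)
  have hkey2 : γ⁻¹ * f ≤ g := aux_key hMu hMw hγ0 hquad1 (A i)
  have hg_ub : g ≤ γ * f := by
    have h := mul_le_mul_of_nonneg_left hkey1 hγ0.le
    rwa [← mul_assoc, mul_inv_cancel₀ hγ0.ne', one_mul] at h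
  have hg_nonneg : 0 ≤ g := by
    have := (hMu.inv.posSemidef.dotProduct_mulVec_nonneg (A i))
    rw [star_trivial] at this
    exact this
  -- bounds on (c i + u i)^t
  have hlut_ub : (c i + u i) ^ t ≤ γ * (c i + w i) ^ t := by
    have h1 : c i + u i ≤ ν * (c i + w i) := (happrox i).2
    have h2 : (c i + u i) ^ t ≤ (ν * (c i + w i)) ^ t :=
      Real.rpow_le_rpow (hcu i).le h1 ht0
    rwa [Real.mul_rpow hν0.le (hcw i).le, ← hγdef] at h2
  have hlut_lb : γ⁻¹ * (c i + w i) ^ t ≤ (c i + u i) ^ t := by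
    have h1 : ν⁻¹ * (c i + w i) ≤ c i + u i := (happrox i).1
    have h2 : (ν⁻¹ * (c i + w i)) ^ t ≤ (c i + u i) ^ t :=
      Real.rpow_le_rpow (mul_pos (inv_pos.mpr hν0) (hcw i)).le h1 ht0
    rwa [Real.mul_rpow (inv_nonneg.mpr hν0.le) (hcw i).le, Real.inv_rpow hν0.le, ← hγdef] at h2
  -- bounds on the two summands
  have hterm1_ub : (c i + u i) ^ t * σt i ≤ (51/50) * γ * ((c i + w i) ^ t * w i) := by
    have e0 := (hσt i).2
    rw [hlevu] at e0
    have e1 : (c i + u i) ^ t * σt i ≤ (c i + u i) ^ t * ((51/50) * (du i * g)) :=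
      mul_le_mul_of_nonneg_left e0 hlut.le
    have e2 : (c i + u i) ^ t * ((51/50) * (du i * g)) = (51/50) * g := by
      rw [hdui]; field_simp
    have e3 : (51/50 : ℝ) * g ≤ (51/50) * (γ * f) := by linarith
    rw [hfval] at e3
    calc (c i + u i) ^ t * σt i ≤ (51/50) * g := by rw [← e2]; exact e1
      _ ≤ (51/50) * (γ * ((c i + w i) ^ t * w i)) := e3
      _ = (51/50) * γ * ((c i + w i) ^ t * w i) := by ring
  have hterm1_lb : (50/51) * γ⁻¹ * ((c i + w i) ^ t * w i) ≤ (c i + u i) ^ t * σt i := by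
    have e0 := (hσt i).1
    rw [hlevu] at e0
    have e1 : (c i + u i) ^ t * ((50/51) * (du i * g)) ≤ (c i + u i) ^ t * σt i :=
      mul_le_mul_of_nonneg_left e0 hlut.le
    have e2 : (c i + u i) ^ t * ((50/51) * (du i * g)) = (50/51) * g := by
      rw [hdui]; field_simp
    have e3 : (50/51 : ℝ) * (γ⁻¹ * f) ≤ (50/51) * g := by linarith
    rw [hfval] at e3
    calc (50/51) * γ⁻¹ * ((c i + w i) ^ t * w i)
        = (50/51) * (γ⁻¹ * ((c i + w i) ^ t * w i)) := by ring
      _ ≤ (50/51) * g := e3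
      _ ≤ (c i + u i) ^ t * σt i := by rw [← e2]; exact e1
  have hterm2_ub : (c i + u i) ^ t * c i ≤ (51/50) * γ * ((c i + w i) ^ t * c i) := by
    have e1 : (c i + u i) ^ t * c i ≤ (γ * (c i + w i) ^ t) * c i :=
      mul_le_mul_of_nonneg_right hlut_ub (hc i)
    have e2 : (0:ℝ) ≤ γ * ((c i + w i) ^ t * c i) := mul_nonneg hγ0.le (mul_nonneg hlwt.le (hc i))
    have e3 : (γ * (c i + w i) ^ t) * c i = γ * ((c i + w i) ^ t * c i) := mul_assoc _ _ _
    linarith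
  have hterm2_lb : (50/51) * γ⁻¹ * ((c i + w i) ^ t * c i) ≤ (c i + u i) ^ t * c i := by
    have e1 : (γ⁻¹ * (c i + w i) ^ t) * c i ≤ (c i + u i) ^ t * c i :=
      mul_le_mul_of_nonneg_right hlut_lb (hc i)
    have e2 : (0:ℝ) ≤ γ⁻¹ * ((c i + w i) ^ t * c i) := mul_nonneg (inv_nonneg.mpr hγ0.le) (mul_nonneg hlwt.le (hc i))
    have e3 : (γ⁻¹ * (c i + w i) ^ t) * c i = γ⁻¹ * ((c i + w i) ^ t * c i) := mul_assoc _ _ _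
    linarith
  -- the inner expression
  set innr : ℝ := (c i + u i) ^ t * σt i + (c i + u i) ^ t * c i with hinnr
  have hsum : (c i + w i) ^ t * w i + (c i + w i) ^ t * c i = (c i + w i) ^ (t + 1) := by
    rw [Real.rpow_add_one (hcw i).ne']; ring
  have h_in_ub : innr ≤ (51/50) * γ * (c i + w i) ^ (t + 1) := by
    rw [hinnr, ← hsum]; linarith
  have h_in_lb : (50/51) * γ⁻¹ * (c i + w i) ^ (t + 1) ≤ innr := by
    rw [hinnr, ← hsum]; linarith
  have h_lb_pos : (0:ℝ) < (50/51) * γ⁻¹ * (c i + w i) ^ (t + 1) := mul_pos (mul_pos (by norm_num) (inv_pos.mpr hγ0)) (Real.rpow_pos_of_pos (hcw i) _)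
  have h_in_pos : 0 < innr := lt_of_lt_of_le h_lb_pos h_in_lb
  have hcunew : c i + unew i = innr ^ (q/2) := by
    rw [hunew i, hinnr]; ring
  have hq2nn : (0:ℝ) ≤ q/2 := by linarith
  -- exponent arithmetic
  have hexp1 : (t + 1) * (q/2) = 1 := by rw [ht]; field_simp; ring
  have hexp2 : t * (q/2) = 1 - q/2 := by rw [ht]; field_simp
  have hlwpow : ((c i + w i) ^ (t + 1)) ^ (q/2) = c i + w i := by
    rw [← Real.rpow_mul (hcw i).le, hexp1, Real.rpow_one]
  have hγpow : γ ^ (q/2) = ν ^ (1 - q/2) := by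
    rw [hγdef, ← Real.rpow_mul hν0.le, hexp2]
  constructor
  · -- lower bound
    have hs : ((50/51) * γ⁻¹ * (c i + w i) ^ (t + 1)) ^ (q/2) ≤ innr ^ (q/2) :=
      Real.rpow_le_rpow h_lb_pos.le h_in_lb hq2nn
    have heq : ((50/51) * γ⁻¹ * (c i + w i) ^ (t + 1)) ^ (q/2) = μ⁻¹ * (c i + w i) := by
      rw [Real.mul_rpow (mul_nonneg (by norm_num) (inv_nonneg.mpr hγ0.le)) (Real.rpow_pos_of_pos (hcw i) _).le,
        Real.mul_rpow (by norm_num) (inv_nonneg.mpr hγ0.le), hlwpow]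
      rw [Real.inv_rpow hγ0.le, hγpow]
      have h5051 : ((50:ℝ)/51) = ((51:ℝ)/50)⁻¹ := by norm_num
      rw [h5051, Real.inv_rpow (by norm_num), hμ]
      rw [mul_inv]
    rw [hcunew, ← heq]
    exact hs
  · -- upper bound
    have hs : innr ^ (q/2) ≤ ((51/50) * γ * (c i + w i) ^ (t + 1)) ^ (q/2) :=
      Real.rpow_le_rpow h_in_pos.le h_in_ub hq2nn
    have heq : ((51/50) * γ * (c i + w i) ^ (t + 1)) ^ (q/2) = μ * (c i + w i) := by
      rw [Real.mul_rpow (mul_nonneg (by norm_num) hγ0.le) (Real.rpow_pos_of_pos (hcw i) _).le,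
        Real.mul_rpow (by norm_num) hγ0.le, hlwpow, hγpow, hμ]
    rw [hcunew, ← heq]
    exact hs
end

section
/- Let U be a real n×d matrix of full column rank, v ∈ ℝ^d, r ∈ ℝ^n entrywise positive with R = diag(r), p > 2, and q = p/(p−1). Let w ∈ ℝ^n be the c-regularized ℓ_q Lewis weights of U with c = d·r^{p/(p−2)} (i.e., w_i = σ((diag(c)+W)^{1/2−1/q}U)_i for all i), and let ŵ ∈ ℝ^n be entrywise positive with 0.9·w_i ≤ ŵ_i ≤ 1.1·w_i for all i. Suppose there exists x ∈ ℝ^n with U^⊤x = v, x^⊤Rx ≤ 1, and ‖x‖_p ≤ 1. Then the minimizer y of x ↦ x^⊤(d^{1−2/p}R + Ŵ^{1−2/p})x over { x : U^⊤x = v }, where Ŵ = diag(ŵ), satisfies U^⊤y = v, y^⊤Ry ≤ 3, and ‖y‖_p^p ≤ 4^p·d^{p/2−1}. -/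
open Matrix Finset

section helpers

variable {n d : ℕ}

lemma dot_diag_mulVec (b x : Fin n → ℝ) :
    x ⬝ᵥ (Matrix.diagonal b *ᵥ x) = ∑ i, b i * x i ^ 2 := by
  simp [dotProduct, Matrix.mulVec_diagonal]
  exact Finset.sum_congr rfl fun i _ => by ring

lemma mulVec_inj_of_rank (U : Matrix (Fin n) (Fin d) ℝ) (hU : U.rank = d) :
    ∀ x : Fin d → ℝ, U *ᵥ x = 0 → x = 0 := by
  intro x hx
  have hker : LinearMap.ker U.mulVecLin = ⊥ := by
    have h1 := LinearMap.finrank_range_add_finrank_ker U.mulVecLin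
    rw [Matrix.rank] at hU
    have h2 : Module.finrank ℝ (Fin d → ℝ) = d := by simp
    rw [hU, h2] at h1
    have : Module.finrank ℝ (LinearMap.ker U.mulVecLin) = 0 := by omega
    exact Submodule.finrank_eq_zero.mp this
  have : x ∈ LinearMap.ker U.mulVecLin := by
    simpa [Matrix.mulVecLin] using hx
  rw [hker] at this
  simpa using this

lemma conj_posdef (U : Matrix (Fin n) (Fin d) ℝ)
    (hinj : ∀ x : Fin d → ℝ, U *ᵥ x = 0 → x = 0)
    (b : Fin n → ℝ) (hb : ∀ i, 0 < b i) :
    (Uᵀ * Matrix.diagonal b * U).PosDef := by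
  rw [Matrix.posDef_iff_dotProduct_mulVec]
  constructor
  · have : (Uᵀ * Matrix.diagonal b * U)ᵀ = Uᵀ * Matrix.diagonal b * U := by
      rw [Matrix.transpose_mul, Matrix.transpose_mul, Matrix.transpose_transpose,
        Matrix.diagonal_transpose, Matrix.mul_assoc]
    rw [Matrix.IsHermitian, Matrix.conjTranspose_eq_transpose_of_trivial]
    exact this
  · intro x hx
    have hquad : star x ⬝ᵥ ((Uᵀ * Matrix.diagonal b * U) *ᵥ x)
        = ∑ i, b i * (U *ᵥ x) i ^ 2 := by
      rw [star_trivial, ← Matrix.mulVec_mulVec, ← Matrix.mulVec_mulVec,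
        Matrix.dotProduct_mulVec, ← Matrix.mulVec_transpose, Matrix.transpose_transpose]
      exact dot_diag_mulVec b (U *ᵥ x)
    rw [hquad]
    have hUx : U *ᵥ x ≠ 0 := fun h => hx (hinj x h)
    obtain ⟨i, hi⟩ : ∃ i, (U *ᵥ x) i ≠ 0 := by
      by_contra h
      push_neg at h
      exact hUx (funext h)
    apply Finset.sum_pos' (fun j _ => mul_nonneg (hb j).le (sq_nonneg _))
    exact ⟨i, Finset.mem_univ i, mul_pos (hb i) (by positivity)⟩

lemma cs_posdef (H : Matrix (Fin d) (Fin d) ℝ) (hPD : H.PosDef)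
    (u lam : Fin d → ℝ) (hg : 0 < u ⬝ᵥ (H⁻¹ *ᵥ u)) :
    (u ⬝ᵥ lam) ^ 2 ≤ (u ⬝ᵥ (H⁻¹ *ᵥ u)) * (lam ⬝ᵥ (H *ᵥ lam)) := by
  have hdet : IsUnit H.det := hPD.det_pos.ne'.isUnit
  have hHi : H * H⁻¹ = 1 := Matrix.mul_nonsing_inv H hdet
  have hsym : Hᵀ = H := by
    have := hPD.1
    rwa [Matrix.IsHermitian, Matrix.conjTranspose_eq_transpose_of_trivial] at this
  set g : ℝ := u ⬝ᵥ (H⁻¹ *ᵥ u) with hgdef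
  set S : ℝ := u ⬝ᵥ lam with hSdef
  set h : Fin d → ℝ := H⁻¹ *ᵥ u with hhdef
  set T : ℝ := lam ⬝ᵥ (H *ᵥ lam) with hTdef
  have hHh : H *ᵥ h = u := by
    rw [hhdef, Matrix.mulVec_mulVec, hHi, Matrix.one_mulVec]
  have hkey : ∀ z : Fin d → ℝ, h ⬝ᵥ (H *ᵥ z) = u ⬝ᵥ z := by
    intro z
    rw [Matrix.dotProduct_mulVec, ← Matrix.mulVec_transpose, hsym, hHh]
  have hpsd : ∀ z : Fin d → ℝ, 0 ≤ z ⬝ᵥ (H *ᵥ z) := by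
    intro z
    rcases eq_or_ne z 0 with rfl | hz
    · simp
    · have := hPD.dotProduct_mulVec_pos hz
      simpa using this.le
  set c : ℝ := S / g with hcdef
  have e1 : lam ⬝ᵥ (H *ᵥ h) = S := by rw [hHh, dotProduct_comm]
  have e2 : h ⬝ᵥ (H *ᵥ lam) = S := hkey lam
  have e3 : h ⬝ᵥ (H *ᵥ h) = g := by rw [hkey h]
  have hexp : (lam - c • h) ⬝ᵥ (H *ᵥ (lam - c • h)) = T - 2 * c * S + c ^ 2 * g := by
    rw [Matrix.mulVec_sub, Matrix.mulVec_smul, dotProduct_sub, sub_dotProduct,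
      sub_dotProduct, smul_dotProduct, smul_dotProduct, dotProduct_smul, dotProduct_smul,
      e1, e2, e3]
    simp only [smul_eq_mul]
    ring
  have hineq : 0 ≤ T - 2 * c * S + c ^ 2 * g := by rw [← hexp]; exact hpsd _
  have e4 : c * g = S := div_mul_cancel₀ S hg.ne'
  have e5 : c ^ 2 * g = c * S := by rw [pow_two, mul_assoc, e4]
  have hcS : c * S ≤ T := by linarith
  have e6 : S ^ 2 = c * S * g := by rw [← e4]; ring
  calc S ^ 2 = c * S * g := e6
    _ ≤ T * g := mul_le_mul_of_nonneg_right hcS hg.le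
    _ = g * T := mul_comm _ _

lemma sum_dot_inv_eq_trace (M : Matrix (Fin n) (Fin d) ℝ) (B : Matrix (Fin d) (Fin d) ℝ) :
    ∑ i, M i ⬝ᵥ (B *ᵥ M i) = Matrix.trace (B * (Mᵀ * M)) := by
  simp only [Matrix.trace, Matrix.diag, Matrix.mul_apply, dotProduct, Matrix.mulVec,
    Matrix.transpose_apply, Finset.mul_sum, Finset.sum_mul]
  rw [Finset.sum_comm]
  refine Finset.sum_congr rfl fun j _ => ?_
  rw [Finset.sum_comm]
  refine Finset.sum_congr rfl fun k _ => ?_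
  refine Finset.sum_congr rfl fun i _ => ?_
  ring

lemma rpow_subadd {x y θ : ℝ} (hx : 0 ≤ x) (hy : 0 ≤ y) (h0 : 0 ≤ θ) (h1 : θ ≤ 1) :
    (x + y) ^ θ ≤ x ^ θ + y ^ θ := by
  lift x to NNReal using hx
  lift y to NNReal using hy
  have := NNReal.rpow_add_le_add_rpow x y h0 h1
  exact_mod_cast this

end helpers

set_option maxHeartbeats 2000000 in
theorem stmt18 {n d : ℕ} (U : Matrix (Fin n) (Fin d) ℝ) (hU : U.rank = d) (hd : 0 < d)
    (v : Fin d → ℝ) (r : Fin n → ℝ) (hr : ∀ i, 0 < r i)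
    (p : ℝ) (hp : 2 < p) (q : ℝ) (hq : q = p / (p - 1))
    (w : Fin n → ℝ) (hw0 : ∀ i, 0 ≤ w i)
    (hfix : ∀ i, w i = levScore (Matrix.diagonal
      (fun j => ((d : ℝ) * r j ^ (p/(p - 2)) + w j) ^ ((1:ℝ)/2 - 1/q)) * U) i)
    (wHat : Fin n → ℝ) (hwHatpos : ∀ i, 0 < wHat i)
    (hwHat : ∀ i, 0.9 * w i ≤ wHat i ∧ wHat i ≤ 1.1 * w i)
    (hex : ∃ x : Fin n → ℝ, Uᵀ *ᵥ x = v ∧ x ⬝ᵥ (Matrix.diagonal r *ᵥ x) ≤ 1 ∧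
      (∑ i, |x i| ^ p) ^ (1/p) ≤ 1)
    (y : Fin n → ℝ) (hyfeas : Uᵀ *ᵥ y = v)
    (hymin : ∀ x : Fin n → ℝ, Uᵀ *ᵥ x = v →
      y ⬝ᵥ (((d : ℝ) ^ (1 - 2/p) • Matrix.diagonal r +
        Matrix.diagonal (fun i => wHat i ^ (1 - 2/p))) *ᵥ y) ≤
      x ⬝ᵥ (((d : ℝ) ^ (1 - 2/p) • Matrix.diagonal r +
        Matrix.diagonal (fun i => wHat i ^ (1 - 2/p))) *ᵥ x)) :
    y ⬝ᵥ (Matrix.diagonal r *ᵥ y) ≤ 3 ∧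
    ∑ i, |y i| ^ p ≤ (4:ℝ) ^ p * (d : ℝ) ^ (p/2 - 1) := by
  obtain ⟨x, hxv, hxR, hxp⟩ := hex
  have hp0 : (0:ℝ) < p := by linarith
  have hp2 : (0:ℝ) < p - 2 := by linarith
  have hp1 : (0:ℝ) < p - 1 := by linarith
  set α : ℝ := 1 - 2/p with hα
  have h2p : 0 < 2/p := by positivity
  have h2p1 : 2/p < 1 := by rw [div_lt_one hp0]; linarith
  have hα0 : 0 < α := by rw [hα]; linarith
  have hα1 : α ≤ 1 := by rw [hα]; linarith
  have hd1 : (1:ℝ) ≤ (d:ℝ) := by exact_mod_cast hd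
  have hdα : (0:ℝ) < (d:ℝ) ^ α := Real.rpow_pos_of_pos (by linarith) α
  set cg : Fin n → ℝ := fun i => (d:ℝ) * r i ^ (p/(p-2)) with hcg
  have hcpos : ∀ i, 0 < cg i := fun i => by
    have h1 := hr i
    have : (0:ℝ) < (d:ℝ) := by linarith
    positivity
  have hwpos : ∀ i, 0 < w i := fun i => by
    have h1 := (hwHat i).2
    have h2 := hwHatpos i
    nlinarith
  set A : Fin n → ℝ := fun i => (d:ℝ) ^ α * r i + wHat i ^ α with hAdef
  have hApos : ∀ i, 0 < A i := fun i => by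
    have h1 := hr i
    have h2 := Real.rpow_pos_of_pos (hwHatpos i) α
    have := hdα
    show 0 < (d:ℝ) ^ α * r i + wHat i ^ α
    positivity
  set s : Fin n → ℝ := fun i => (cg i + w i) ^ α with hsdef
  have hspos : ∀ i, 0 < s i := fun i =>
    Real.rpow_pos_of_pos (by have := hcpos i; have := hwpos i; linarith) α
  -- scalar facts
  have hcgα : ∀ i, cg i ^ α = (d:ℝ) ^ α * r i := by
    intro i
    have hre : (r i ^ (p/(p-2))) ^ α = r i := by
      rw [← Real.rpow_mul (hr i).le]
      have : p / (p-2) * α = 1 := by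
        rw [hα]; field_simp
      rw [this, Real.rpow_one]
    have h0 : (0:ℝ) ≤ (d:ℝ) := by positivity
    have h1 : (0:ℝ) ≤ r i ^ (p/(p-2)) := Real.rpow_nonneg (hr i).le _
    show ((d:ℝ) * r i ^ (p/(p-2))) ^ α = (d:ℝ) ^ α * r i
    rw [Real.mul_rpow h0 h1, hre]
  have hwhatα_le : ∀ i, wHat i ^ α ≤ 1.1 * w i ^ α := by
    intro i
    have h1 : wHat i ^ α ≤ (1.1 * w i) ^ α :=
      Real.rpow_le_rpow (hwHatpos i).le (hwHat i).2 hα0.le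
    have h2 : ((1.1:ℝ) * w i) ^ α = (1.1:ℝ) ^ α * w i ^ α :=
      Real.mul_rpow (by norm_num) (hwpos i).le
    have h3 : (1.1:ℝ) ^ α ≤ 1.1 := by
      calc (1.1:ℝ) ^ α ≤ (1.1:ℝ) ^ (1:ℝ) :=
            Real.rpow_le_rpow_of_exponent_le (by norm_num) hα1
        _ = 1.1 := Real.rpow_one _
    have h4 := Real.rpow_nonneg (hwpos i).le α
    nlinarith
  have hwα_le : ∀ i, w i ^ α ≤ (10/9) * wHat i ^ α := by
    intro i
    have h1 : w i ≤ (10/9) * wHat i := by have := (hwHat i).1; linarith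
    have h2 : w i ^ α ≤ ((10/9) * wHat i) ^ α :=
      Real.rpow_le_rpow (hwpos i).le h1 hα0.le
    have h3 : ((10/9 : ℝ) * wHat i) ^ α = (10/9 : ℝ) ^ α * wHat i ^ α :=
      Real.mul_rpow (by norm_num) (hwHatpos i).le
    have h4 : ((10:ℝ)/9) ^ α ≤ 10/9 := by
      calc ((10:ℝ)/9) ^ α ≤ ((10:ℝ)/9) ^ (1:ℝ) :=
            Real.rpow_le_rpow_of_exponent_le (by norm_num) hα1
        _ = 10/9 := Real.rpow_one _
    have h5 := Real.rpow_nonneg (hwHatpos i).le α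
    nlinarith
  have hA22 : ∀ i, A i ≤ 2.2 * s i := by
    intro i
    have h1 : cg i ^ α ≤ s i :=
      Real.rpow_le_rpow (hcpos i).le (by have := hwpos i; linarith) hα0.le
    have h2 : w i ^ α ≤ s i :=
      Real.rpow_le_rpow (hwpos i).le (by have := hcpos i; linarith) hα0.le
    have h3 := hwhatα_le i
    have h4 := hcgα i
    have h5 := (hspos i).le
    show (d:ℝ) ^ α * r i + wHat i ^ α ≤ 2.2 * s i
    nlinarith
  have hs109 : ∀ i, s i ≤ (10/9) * A i := by
    intro i
    have h1 : s i ≤ cg i ^ α + w i ^ α :=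
      rpow_subadd (hcpos i).le (hwpos i).le hα0.le hα1
    have h2 := hwα_le i
    have h3 := hcgα i
    have h4 : 0 ≤ cg i ^ α := Real.rpow_nonneg (hcpos i).le α
    show s i ≤ (10/9) * ((d:ℝ) ^ α * r i + wHat i ^ α)
    nlinarith
  have hAw : ∀ i, 0.9 * w i ^ α ≤ A i := by
    intro i
    have h1 : (0.9 * w i) ^ α ≤ wHat i ^ α :=
      Real.rpow_le_rpow (by have := hwpos i; linarith) (hwHat i).1 hα0.le
    have h2 : ((0.9:ℝ) * w i) ^ α = (0.9:ℝ) ^ α * w i ^ α :=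
      Real.mul_rpow (by norm_num) (hwpos i).le
    have h3 : (0.9:ℝ) ≤ (0.9:ℝ) ^ α := by
      calc (0.9:ℝ) = (0.9:ℝ) ^ (1:ℝ) := (Real.rpow_one _).symm
        _ ≤ (0.9:ℝ) ^ α := Real.rpow_le_rpow_of_exponent_ge (by norm_num) (by norm_num) hα1
    have h4 := Real.rpow_nonneg (hwpos i).le α
    have h5 : 0 ≤ (d:ℝ) ^ α * r i :=
      mul_nonneg (Real.rpow_nonneg (by positivity) α) (hr i).le
    show 0.9 * w i ^ α ≤ (d:ℝ) ^ α * r i + wHat i ^ α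
    nlinarith
  -- quadratic form
  have hQform : ∀ z : Fin n → ℝ,
      z ⬝ᵥ (((d : ℝ) ^ α • Matrix.diagonal r +
        Matrix.diagonal (fun i => wHat i ^ α)) *ᵥ z) = ∑ i, A i * z i ^ 2 := by
    intro z
    rw [Matrix.add_mulVec, dotProduct_add, Matrix.smul_mulVec, dotProduct_smul,
      dot_diag_mulVec, dot_diag_mulVec]
    simp only [smul_eq_mul]
    rw [Finset.mul_sum, ← Finset.sum_add_distrib]
    exact Finset.sum_congr rfl fun i _ => by show _ = ((d:ℝ) ^ α * r i + wHat i ^ α) * z i ^ 2; ring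
  set Qy : ℝ := ∑ i, A i * y i ^ 2 with hQydef
  have hQy0 : 0 ≤ Qy :=
    Finset.sum_nonneg fun i _ => mul_nonneg (hApos i).le (sq_nonneg _)
  -- matrices
  have hinj := mulVec_inj_of_rank U hU
  set t : Fin n → ℝ := fun i => (s i)⁻¹ with htdef
  have htpos : ∀ i, 0 < t i := fun i => by rw [htdef]; exact inv_pos.2 (hspos i)
  set H : Matrix (Fin d) (Fin d) ℝ := Uᵀ * Matrix.diagonal t * U with hHdef
  have hHPD : H.PosDef := by rw [hHdef]; exact conj_posdef U hinj t htpos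
  have hHdet : IsUnit H.det := hHPD.det_pos.ne'.isUnit
  set D' : Fin n → ℝ := fun j => ((d : ℝ) * r j ^ (p/(p - 2)) + w j) ^ ((1:ℝ)/2 - 1/q)
    with hD'def
  set M : Matrix (Fin n) (Fin d) ℝ := Matrix.diagonal D' * U with hMdef
  have hfixM : ∀ i, w i = levScore M i := hfix
  have hD'cg : ∀ j, D' j = (cg j + w j) ^ ((1:ℝ)/2 - 1/q) := fun j => by
    simp only [hD'def, hcg]
  have hD'sq : ∀ i, D' i * D' i = t i := by
    intro i
    have hcw : 0 < cg i + w i := by have := hcpos i; have := hwpos i; linarith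
    rw [hD'cg i, htdef, hsdef]
    rw [← Real.rpow_add hcw]
    have h2 : ((1:ℝ)/2 - 1/q) + ((1:ℝ)/2 - 1/q) = -α := by
      rw [hq, hα]
      field_simp
      ring
    rw [h2, Real.rpow_neg hcw.le]
  have hMM : Mᵀ * M = H := by
    have h1 : (fun i => D' i * D' i) = t := funext fun i => hD'sq i
    rw [hMdef, hHdef, Matrix.transpose_mul, Matrix.diagonal_transpose,
      Matrix.mul_assoc Uᵀ (Matrix.diagonal D') _,
      ← Matrix.mul_assoc (Matrix.diagonal D') (Matrix.diagonal D') U,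
      Matrix.diagonal_mul_diagonal, h1, ← Matrix.mul_assoc]
  have hrowM : ∀ i, M i = D' i • U i := by
    intro i
    funext j
    rw [hMdef]
    show (Matrix.diagonal D' * U) i j = D' i * U i j
    rw [Matrix.diagonal_mul]
  -- sum of lewis weights = d
  have hsumw : ∑ i, w i = d := by
    have h1 : ∑ i, w i = ∑ i, M i ⬝ᵥ ((Mᵀ * M)⁻¹ *ᵥ M i) := by
      refine Finset.sum_congr rfl fun i _ => ?_
      rw [hfixM i]
      rfl
    rw [h1, sum_dot_inv_eq_trace M _, hMM, Matrix.nonsing_inv_mul H hHdet, Matrix.trace_one]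
    simp
  -- the lewis weight fixed point identity
  have hgdot : ∀ i, U i ⬝ᵥ (H⁻¹ *ᵥ U i) = w i * s i := by
    intro i
    have h1 : w i = t i * (U i ⬝ᵥ (H⁻¹ *ᵥ U i)) := by
      conv_lhs => rw [hfixM i]
      show M i ⬝ᵥ ((Mᵀ * M)⁻¹ *ᵥ M i) = _
      rw [hMM, hrowM i, Matrix.mulVec_smul, smul_dotProduct, dotProduct_smul,
        smul_eq_mul, smul_eq_mul, ← mul_assoc, hD'sq i]
    have hsi := hspos i
    rw [htdef] at h1
    have h2 := congrArg (fun z => s i * z) h1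
    simp only [← mul_assoc, mul_inv_cancel₀ hsi.ne', one_mul] at h2
    linarith
  -- Qy ≤ 2.1 d^α
  have hQ : Qy ≤ 2.1 * (d:ℝ) ^ α := by
    have hm := hymin x hxv
    rw [hQform, hQform] at hm
    have hxp1 : ∑ i, |x i| ^ p ≤ 1 := by
      have hS0 : 0 ≤ ∑ i, |x i| ^ p :=
        Finset.sum_nonneg fun i _ => Real.rpow_nonneg (abs_nonneg _) _
      have he : (∑ i, |x i| ^ p) = ((∑ i, |x i| ^ p) ^ ((1:ℝ)/p)) ^ p := by
        rw [← Real.rpow_mul hS0]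
        rw [one_div, inv_mul_cancel₀ hp0.ne', Real.rpow_one]
      rw [he]
      exact Real.rpow_le_one (Real.rpow_nonneg hS0 _) hxp hp0.le
    have hxR' : ∑ i, r i * x i ^ 2 ≤ 1 := by rwa [dot_diag_mulVec] at hxR
    -- Hölder
    have hab : Real.HolderConjugate (p/(p-2)) (p/2) := by
      rw [Real.holderConjugate_iff]
      constructor
      · rw [one_lt_div hp2]; linarith
      · field_simp
        ring
    have hhold := Real.inner_le_Lp_mul_Lq_of_nonneg (s := Finset.univ) hab
      (f := fun i => wHat i ^ α) (g := fun i => x i ^ 2)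
      (fun i _ => Real.rpow_nonneg (hwHatpos i).le α) (fun i _ => sq_nonneg _)
    have e1 : ∀ i : Fin n, (wHat i ^ α) ^ (p/(p-2)) = wHat i := by
      intro i
      rw [← Real.rpow_mul (hwHatpos i).le]
      have : α * (p/(p-2)) = 1 := by rw [hα]; field_simp
      rw [this, Real.rpow_one]
    have e2 : ∀ i : Fin n, ((x i ^ 2 : ℝ)) ^ (p/2) = |x i| ^ p := by
      intro i
      rw [← sq_abs, ← Real.rpow_natCast |x i| 2, ← Real.rpow_mul (abs_nonneg _)]
      norm_num
      congr 1
      ring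
    rw [Finset.sum_congr rfl (fun i _ => e1 i), Finset.sum_congr rfl (fun i _ => e2 i)] at hhold
    have hsumwh : ∑ i, wHat i ≤ 1.1 * (d:ℝ) := by
      have h1 : ∑ i, wHat i ≤ ∑ i, 1.1 * w i := Finset.sum_le_sum fun i _ => (hwHat i).2
      rw [← Finset.mul_sum, hsumw] at h1
      exact h1
    have hwh0 : 0 ≤ ∑ i, wHat i := Finset.sum_nonneg fun i _ => (hwHatpos i).le
    have h2 : (∑ i, wHat i) ^ (1/(p/(p-2))) ≤ 1.1 * (d:ℝ) ^ α := by
      have hee : 1/(p/(p-2)) = α := by rw [hα]; field_simp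
      rw [hee]
      calc (∑ i, wHat i) ^ α ≤ (1.1 * (d:ℝ)) ^ α :=
            Real.rpow_le_rpow hwh0 hsumwh hα0.le
        _ = (1.1:ℝ) ^ α * (d:ℝ) ^ α := Real.mul_rpow (by norm_num) (by positivity)
        _ ≤ 1.1 * (d:ℝ) ^ α := by
            have h3 : (1.1:ℝ) ^ α ≤ 1.1 := by
              calc (1.1:ℝ) ^ α ≤ (1.1:ℝ) ^ (1:ℝ) :=
                    Real.rpow_le_rpow_of_exponent_le (by norm_num) hα1
                _ = 1.1 := Real.rpow_one _
            nlinarith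
    have h3 : (∑ i, |x i| ^ p) ^ (1/(p/2)) ≤ 1 :=
      Real.rpow_le_one (Finset.sum_nonneg fun i _ => Real.rpow_nonneg (abs_nonneg _) _)
        hxp1 (by positivity)
    have h4 : ∑ i, wHat i ^ α * x i ^ 2 ≤ 1.1 * (d:ℝ) ^ α := by
      calc ∑ i, wHat i ^ α * x i ^ 2
          ≤ (∑ i, wHat i) ^ (1/(p/(p-2))) * (∑ i, |x i| ^ p) ^ (1/(p/2)) := hhold
        _ ≤ (1.1 * (d:ℝ) ^ α) * 1 := by
            apply mul_le_mul h2 h3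
              (Real.rpow_nonneg (Finset.sum_nonneg fun i _ =>
                Real.rpow_nonneg (abs_nonneg _) _) _) (by positivity)
        _ = 1.1 * (d:ℝ) ^ α := mul_one _
    have h5 : ∑ i, A i * x i ^ 2
        = (d:ℝ) ^ α * (∑ i, r i * x i ^ 2) + ∑ i, wHat i ^ α * x i ^ 2 := by
      rw [Finset.mul_sum, ← Finset.sum_add_distrib]
      refine Finset.sum_congr rfl fun i _ => ?_
      show ((d:ℝ) ^ α * r i + wHat i ^ α) * x i ^ 2 = _
      ring
    have h6 : (d:ℝ) ^ α * (∑ i, r i * x i ^ 2) ≤ (d:ℝ) ^ α * 1 :=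
      mul_le_mul_of_nonneg_left hxR' hdα.le
    calc Qy ≤ ∑ i, A i * x i ^ 2 := hm
      _ = (d:ℝ) ^ α * (∑ i, r i * x i ^ 2) + ∑ i, wHat i ^ α * x i ^ 2 := h5
      _ ≤ (d:ℝ) ^ α * 1 + 1.1 * (d:ℝ) ^ α := add_le_add h6 h4
      _ = 2.1 * (d:ℝ) ^ α := by ring
  have goal1 : y ⬝ᵥ (Matrix.diagonal r *ᵥ y) ≤ 3 := by
    rw [dot_diag_mulVec]
    have h1 : (d:ℝ) ^ α * ∑ i, r i * y i ^ 2 ≤ Qy := by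
      rw [Finset.mul_sum]
      apply Finset.sum_le_sum
      intro i _
      have h2 : 0 ≤ wHat i ^ α * y i ^ 2 :=
        mul_nonneg (Real.rpow_nonneg (hwHatpos i).le α) (sq_nonneg _)
      have h3 : A i * y i ^ 2 = (d:ℝ) ^ α * (r i * y i ^ 2) + wHat i ^ α * y i ^ 2 := by
        show ((d:ℝ) ^ α * r i + wHat i ^ α) * y i ^ 2 = _
        ring
      linarith
    have h3 : (d:ℝ) ^ α * ∑ i, r i * y i ^ 2 ≤ (d:ℝ) ^ α * 2.1 := by
      rw [mul_comm ((d:ℝ) ^ α) 2.1]; exact le_trans h1 hQ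
    have h4 : ∑ i, r i * y i ^ 2 ≤ 2.1 := le_of_mul_le_mul_left h3 hdα
    linarith
  -- identification of the minimizer
  set G : Matrix (Fin d) (Fin d) ℝ := Uᵀ * Matrix.diagonal (fun i => (A i)⁻¹) * U with hGdef
  have hGPD : G.PosDef := by
    rw [hGdef]; exact conj_posdef U hinj _ (fun i => inv_pos.2 (hApos i))
  have hGdet : IsUnit G.det := hGPD.det_pos.ne'.isUnit
  have hGmul : G * G⁻¹ = 1 := Matrix.mul_nonsing_inv G hGdet
  set lam : Fin d → ℝ := G⁻¹ *ᵥ v with hlamdef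
  set ystar : Fin n → ℝ := fun i => (A i)⁻¹ * (U *ᵥ lam) i with hystardef
  have hystar_diag : ystar = Matrix.diagonal (fun i => (A i)⁻¹) *ᵥ (U *ᵥ lam) := by
    funext i
    rw [hystardef]
    show (A i)⁻¹ * (U *ᵥ lam) i = _
    rw [Matrix.mulVec_diagonal]
  have hUystar : Uᵀ *ᵥ ystar = v := by
    rw [hystar_diag, Matrix.mulVec_mulVec, Matrix.mulVec_mulVec, ← hGdef,
      hlamdef, Matrix.mulVec_mulVec, hGmul, Matrix.one_mulVec]
  set z : Fin n → ℝ := y - ystar with hzdef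
  have hzi : ∀ i, z i = y i - ystar i := fun i => rfl
  have hUz : Uᵀ *ᵥ z = 0 := by
    rw [hzdef, Matrix.mulVec_sub, hyfeas, hUystar, sub_self]
  have hstat : ∑ i, A i * (y i * z i) = 0 := by
    set S : ℝ := ∑ i, A i * (y i * z i) with hSdef
    set T : ℝ := ∑ i, A i * z i ^ 2 with hTdef
    have hT0 : 0 ≤ T :=
      Finset.sum_nonneg fun i _ => mul_nonneg (hApos i).le (sq_nonneg _)
    have key : ∀ τ : ℝ, 0 ≤ 2 * τ * S + τ ^ 2 * T := by
      intro τ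
      have hfeas : Uᵀ *ᵥ (y + τ • z) = v := by
        rw [Matrix.mulVec_add, Matrix.mulVec_smul, hUz, hyfeas]
        simp
      have hm := hymin (y + τ • z) hfeas
      rw [hQform, hQform] at hm
      have hexp : ∑ i, A i * (y + τ • z) i ^ 2
          = Qy + (2 * τ * S + τ ^ 2 * T) := by
        have h1 : ∀ i, A i * (y + τ • z) i ^ 2
            = A i * y i ^ 2 + (2 * τ * (A i * (y i * z i)) + τ ^ 2 * (A i * z i ^ 2)) := by
          intro i
          have : (y + τ • z) i = y i + τ * z i := rfl
          rw [this]
          ring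
        rw [Finset.sum_congr rfl fun i _ => h1 i, Finset.sum_add_distrib,
          Finset.sum_add_distrib, ← Finset.mul_sum, ← Finset.mul_sum, ← hSdef, ← hTdef,
          ← hQydef]
      rw [hexp] at hm
      linarith
    have h1 := key (-(S / (T + 1)))
    have hT1 : (0:ℝ) < T + 1 := by linarith
    have h2 : 0 ≤ (2 * (-(S / (T + 1))) * S + (-(S / (T + 1))) ^ 2 * T) * (T + 1) ^ 2 :=
      mul_nonneg h1 (sq_nonneg _)
    have h3 : (2 * (-(S / (T + 1))) * S + (-(S / (T + 1))) ^ 2 * T) * (T + 1) ^ 2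
        = -(S ^ 2 * (T + 2)) := by
      field_simp
      ring
    rw [h3] at h2
    have h4 : S ^ 2 = 0 := by nlinarith [sq_nonneg S]
    exact (pow_eq_zero_iff two_ne_zero).mp h4
  have hAyz : ∑ i, A i * (ystar i * z i) = 0 := by
    have h1 : ∀ i, A i * (ystar i * z i) = (U *ᵥ lam) i * z i := by
      intro i
      rw [hystardef]
      show A i * ((A i)⁻¹ * (U *ᵥ lam) i * z i) = _
      rw [← mul_assoc, ← mul_assoc, mul_inv_cancel₀ (hApos i).ne', one_mul]
    rw [Finset.sum_congr rfl fun i _ => h1 i]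
    have h2 : ∑ i, (U *ᵥ lam) i * z i = (U *ᵥ lam) ⬝ᵥ z := rfl
    rw [h2, dotProduct_comm, Matrix.dotProduct_mulVec, ← Matrix.mulVec_transpose, hUz,
      zero_dotProduct]
  have hz0 : ∀ i, z i = 0 := by
    have hsum0 : ∑ i, A i * z i ^ 2 = 0 := by
      have h1 : ∀ i, A i * z i ^ 2 = A i * (y i * z i) - A i * (ystar i * z i) := by
        intro i
        rw [hzi i]
        ring
      rw [Finset.sum_congr rfl fun i _ => h1 i, Finset.sum_sub_distrib, hstat, hAyz, sub_zero]
    intro i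
    have h2 := (Finset.sum_eq_zero_iff_of_nonneg
      (fun j _ => mul_nonneg (hApos j).le (sq_nonneg (z j)))).mp hsum0 i (Finset.mem_univ i)
    have h3 : z i ^ 2 = 0 := by
      rcases mul_eq_zero.mp h2 with h | h
      · exact absurd h (hApos i).ne'
      · exact h
    exact (pow_eq_zero_iff two_ne_zero).mp h3
  have hyA : ∀ i, (U *ᵥ lam) i = A i * y i := by
    intro i
    have h1 : y i = ystar i := by
      have := hz0 i
      rw [hzi i] at this
      linarith
    rw [h1, hystardef]
    show (U *ᵥ lam) i = A i * ((A i)⁻¹ * (U *ᵥ lam) i)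
    rw [← mul_assoc, mul_inv_cancel₀ (hApos i).ne', one_mul]
  -- the quadratic form of lam against H
  have hTbd : lam ⬝ᵥ (H *ᵥ lam) ≤ 2.2 * Qy := by
    have hexp : lam ⬝ᵥ (H *ᵥ lam) = ∑ i, t i * (U *ᵥ lam) i ^ 2 := by
      rw [hHdef, ← Matrix.mulVec_mulVec, ← Matrix.mulVec_mulVec, Matrix.dotProduct_mulVec,
        Matrix.vecMul_transpose]
      exact dot_diag_mulVec t (U *ᵥ lam)
    rw [hexp]
    have h1 : ∀ i, t i * (U *ᵥ lam) i ^ 2 ≤ 2.2 * (A i * y i ^ 2) := by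
      intro i
      have htA : t i * A i ≤ 2.2 := by
        rw [htdef]
        rw [inv_mul_le_iff₀ (hspos i)]
        calc A i ≤ 2.2 * s i := hA22 i
          _ = s i * 2.2 := mul_comm _ _
      have h2 : t i * (U *ᵥ lam) i ^ 2 = (t i * A i) * (A i * y i ^ 2) := by
        rw [hyA i]
        ring
      rw [h2]
      exact mul_le_mul_of_nonneg_right htA (mul_nonneg (hApos i).le (sq_nonneg _))
    calc ∑ i, t i * (U *ᵥ lam) i ^ 2 ≤ ∑ i, 2.2 * (A i * y i ^ 2) :=
          Finset.sum_le_sum fun i _ => h1 i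
      _ = 2.2 * Qy := by rw [← Finset.mul_sum, ← hQydef]
  -- pointwise bound
  have hpt : ∀ i, y i ^ 2 ≤ (220/81) * Qy * w i ^ (1 - α) := by
    intro i
    have hgpos : 0 < U i ⬝ᵥ (H⁻¹ *ᵥ U i) := by
      rw [hgdot i]
      exact mul_pos (hwpos i) (hspos i)
    have hcs := cs_posdef H hHPD (U i) lam hgpos
    rw [hgdot i] at hcs
    have hUilam : U i ⬝ᵥ lam = A i * y i := by
      rw [← hyA i]
      rfl
    rw [hUilam] at hcs
    have hc2 : (w i * s i) * (lam ⬝ᵥ (H *ᵥ lam)) ≤ (w i * s i) * (2.2 * Qy) :=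
      mul_le_mul_of_nonneg_left hTbd (mul_nonneg (hwpos i).le (hspos i).le)
    have hc3 : (w i * s i) * (2.2 * Qy) ≤ (w i * ((10/9) * A i)) * (2.2 * Qy) := by
      apply mul_le_mul_of_nonneg_right _ (by positivity)
      exact mul_le_mul_of_nonneg_left (hs109 i) (hwpos i).le
    have hc4 : A i * (A i * y i ^ 2) ≤ A i * ((22/9) * (w i * Qy)) := by
      have hl : (A i * y i) ^ 2 ≤ (w i * ((10/9) * A i)) * (2.2 * Qy) :=
        le_trans hcs (le_trans hc2 hc3)
      calc A i * (A i * y i ^ 2) = (A i * y i) ^ 2 := by ring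
        _ ≤ (w i * ((10/9) * A i)) * (2.2 * Qy) := hl
        _ = A i * ((22/9) * (w i * Qy)) := by ring
    have hc5 : A i * y i ^ 2 ≤ (22/9) * (w i * Qy) :=
      le_of_mul_le_mul_left hc4 (hApos i)
    have hc6 : (0.9 * w i ^ α) * y i ^ 2 ≤ (22/9) * (w i * Qy) :=
      le_trans (mul_le_mul_of_nonneg_right (hAw i) (sq_nonneg _)) hc5
    have hw1α : w i ^ (1 - α) * w i ^ α = w i := by
      rw [← Real.rpow_add (hwpos i)]
      norm_num
    have hc7 : (0.9 * y i ^ 2) * w i ^ α ≤ ((22/9) * (w i ^ (1-α) * Qy)) * w i ^ α := by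
      calc (0.9 * y i ^ 2) * w i ^ α = (0.9 * w i ^ α) * y i ^ 2 := by ring
        _ ≤ (22/9) * (w i * Qy) := hc6
        _ = ((22/9) * (w i ^ (1-α) * Qy)) * w i ^ α := by
            conv_lhs => rw [← hw1α]
            ring
    have hc8 : 0.9 * y i ^ 2 ≤ (22/9) * (w i ^ (1-α) * Qy) :=
      le_of_mul_le_mul_right hc7 (Real.rpow_pos_of_pos (hwpos i) α)
    nlinarith [hc8]
  refine ⟨goal1, ?_⟩
  -- final bound on the ℓ_p norm
  have hwy : ∑ i, w i ^ α * y i ^ 2 ≤ (10/9) * Qy := by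
    have h1 : ∀ i, w i ^ α * y i ^ 2 ≤ (10/9) * (A i * y i ^ 2) := by
      intro i
      have h2 : wHat i ^ α ≤ A i := by
        have h3 : 0 ≤ (d:ℝ) ^ α * r i := mul_nonneg hdα.le (hr i).le
        show _ ≤ (d:ℝ) ^ α * r i + wHat i ^ α
        linarith
      have h4 := hwα_le i
      calc w i ^ α * y i ^ 2 ≤ ((10/9) * wHat i ^ α) * y i ^ 2 :=
            mul_le_mul_of_nonneg_right h4 (sq_nonneg _)
        _ = (10/9) * (wHat i ^ α * y i ^ 2) := by ring
        _ ≤ (10/9) * (A i * y i ^ 2) := by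
            have h6 := mul_le_mul_of_nonneg_right h2 (sq_nonneg (y i))
            exact mul_le_mul_of_nonneg_left h6 (by norm_num)
    calc ∑ i, w i ^ α * y i ^ 2 ≤ ∑ i, (10/9) * (A i * y i ^ 2) :=
          Finset.sum_le_sum fun i _ => h1 i
      _ = (10/9) * Qy := by rw [← Finset.mul_sum, ← hQydef]
  have hKQ0 : 0 ≤ (220/81 : ℝ) * Qy := by positivity
  have hterm : ∀ i, |y i| ^ p ≤ ((220/81) * Qy) ^ (p/2 - 1) * (w i ^ α * y i ^ 2) := by
    intro i
    have habs : |y i| ^ p = ((y i ^ 2 : ℝ)) ^ (p/2) := by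
      rw [← sq_abs, ← Real.rpow_natCast |y i| 2, ← Real.rpow_mul (abs_nonneg _)]
      norm_num
      congr 1
      ring
    rcases eq_or_ne (y i) 0 with h0 | h0
    · rw [habs, h0]
      have : ((0:ℝ) ^ 2 : ℝ) ^ (p/2) = 0 := by
        norm_num
        exact Real.zero_rpow (by positivity)
      rw [this]
      exact mul_nonneg (Real.rpow_nonneg hKQ0 _)
        (mul_nonneg (Real.rpow_nonneg (hwpos i).le _) (sq_nonneg _))
    · have hy2 : (0:ℝ) < y i ^ 2 := by positivity
      have e1 : ((y i ^ 2 : ℝ)) ^ (p/2) = (y i ^ 2 : ℝ) ^ (p/2 - 1) * (y i ^ 2) := by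
        conv_lhs => rw [show p/2 = (p/2 - 1) + 1 by ring]
        rw [Real.rpow_add hy2, Real.rpow_one]
      have e2 : ((y i ^ 2 : ℝ)) ^ (p/2 - 1) ≤ ((220/81) * Qy * w i ^ (1-α)) ^ (p/2 - 1) :=
        Real.rpow_le_rpow (sq_nonneg _) (hpt i) (by linarith)
      have e3 : ((220/81 : ℝ) * Qy * w i ^ (1-α)) ^ (p/2-1)
          = ((220/81) * Qy) ^ (p/2-1) * w i ^ α := by
        rw [Real.mul_rpow hKQ0 (Real.rpow_nonneg (hwpos i).le _),
          ← Real.rpow_mul (hwpos i).le]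
        congr 2
        rw [hα]
        field_simp
        ring
      calc |y i| ^ p = ((y i ^ 2 : ℝ)) ^ (p/2) := habs
        _ = ((y i ^ 2 : ℝ)) ^ (p/2 - 1) * (y i ^ 2) := e1
        _ ≤ (((220/81) * Qy) ^ (p/2-1) * w i ^ α) * (y i ^ 2) := by
            rw [← e3]
            exact mul_le_mul_of_nonneg_right e2 (sq_nonneg _)
        _ = ((220/81) * Qy) ^ (p/2 - 1) * (w i ^ α * y i ^ 2) := by ring
  have hsum2 : ∑ i, |y i| ^ p ≤ ((220/81) * Qy) ^ (p/2-1) * ((10/9) * Qy) := by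
    calc ∑ i, |y i| ^ p ≤ ∑ i, ((220/81) * Qy) ^ (p/2-1) * (w i ^ α * y i ^ 2) :=
          Finset.sum_le_sum fun i _ => hterm i
      _ = ((220/81) * Qy) ^ (p/2-1) * ∑ i, w i ^ α * y i ^ 2 := by rw [← Finset.mul_sum]
      _ ≤ ((220/81) * Qy) ^ (p/2-1) * ((10/9) * Qy) :=
          mul_le_mul_of_nonneg_left hwy (Real.rpow_nonneg hKQ0 _)
  set B : ℝ := 2.1 * (d:ℝ) ^ α with hBdef
  have hB0 : 0 < B := by rw [hBdef]; positivity
  have h6 : ((220/81 : ℝ) * Qy) ^ (p/2-1) ≤ ((220/81) * B) ^ (p/2-1) :=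
    Real.rpow_le_rpow hKQ0 (by nlinarith) (by linarith)
  have h7 : ((220/81 : ℝ) * Qy) ^ (p/2-1) * ((10/9) * Qy)
      ≤ ((220/81) * B) ^ (p/2-1) * ((220/81) * B) := by
    apply mul_le_mul h6 (by nlinarith) (by positivity) (Real.rpow_nonneg (by positivity) _)
  have h8 : ((220/81 : ℝ) * B) ^ (p/2-1) * ((220/81) * B) = ((220/81) * B) ^ (p/2) := by
    have hKB : (0:ℝ) < (220/81 : ℝ) * B := by positivity
    have h81 := (Real.rpow_add hKB (p/2-1) 1).symm
    rw [Real.rpow_one] at h81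
    rw [h81]
    congr 1
    ring
  have h9 : ((220/81 : ℝ) * B) ^ (p/2) ≤ ((6:ℝ) * (d:ℝ) ^ α) ^ (p/2) := by
    apply Real.rpow_le_rpow (by positivity) _ (by positivity)
    rw [hBdef]
    nlinarith
  have h10 : ((6:ℝ) * (d:ℝ) ^ α) ^ (p/2) = 6 ^ (p/2) * (d:ℝ) ^ (p/2 - 1) := by
    rw [Real.mul_rpow (by norm_num) hdα.le, ← Real.rpow_mul (by positivity : (0:ℝ) ≤ (d:ℝ))]
    congr 2
    rw [hα]
    field_simp
  have h11 : (6:ℝ) ^ (p/2) ≤ (4:ℝ) ^ p := by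
    have e4 : (4:ℝ) ^ p = ((16:ℝ)) ^ (p/2) := by
      rw [show (16:ℝ) = (4:ℝ) ^ (2:ℝ) by norm_num [Real.rpow_natCast],
        ← Real.rpow_mul (by norm_num : (0:ℝ) ≤ 4)]
      congr 1
      ring
    rw [e4]
    exact Real.rpow_le_rpow (by norm_num) (by norm_num) (by positivity)
  have hd12 : 0 ≤ (d:ℝ) ^ (p/2 - 1) := Real.rpow_nonneg (by positivity) _
  calc ∑ i, |y i| ^ p ≤ ((220/81) * Qy) ^ (p/2-1) * ((10/9) * Qy) := hsum2
    _ ≤ ((220/81 : ℝ) * B) ^ (p/2) := by rw [← h8]; exact h7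
    _ ≤ ((6:ℝ) * (d:ℝ) ^ α) ^ (p/2) := h9
    _ = 6 ^ (p/2) * (d:ℝ) ^ (p/2 - 1) := h10
    _ ≤ (4:ℝ) ^ p * (d:ℝ) ^ (p/2 - 1) := mul_le_mul_of_nonneg_right h11 hd12
end

section
/- Let A be a real n×d matrix, b ∈ ℝ^n with b not in the column space of A, let q ∈ (1, ∞), and let p = q/(q−1). Then the infimum m₁ = inf_{x∈ℝ^d} ‖Ax − b‖_q and the infimum m₂ = inf{ ‖y‖_p : y ∈ ℝ^n, A^⊤y = 0, b^⊤y = 1 } are both attained over nonempty feasible sets, both are positive, and m₁·m₂ = 1. -/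
open Matrix Filter Topology Finset

lemma stmt19_exists_min {n d : ℕ} (A : Matrix (Fin n) (Fin d) ℝ) (b : Fin n → ℝ)
    {q : ℝ} (hq : 1 < q) :
    ∃ x₀ : Fin d → ℝ, ∀ x : Fin d → ℝ,
      ∑ i, |(A *ᵥ x₀ - b) i| ^ q ≤ ∑ i, |(A *ᵥ x - b) i| ^ q := by
  have hq0 : (0:ℝ) < q := by linarith
  set S : Submodule ℝ (Fin n → ℝ) := LinearMap.range A.mulVecLin with hS
  set f : (Fin n → ℝ) → ℝ := fun v => ∑ i, |v i - b i| ^ q with hf_def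
  have hf : Continuous f := by
    apply continuous_finset_sum
    intro i _
    exact (((continuous_apply i).sub continuous_const).abs).rpow_const
      (fun x => Or.inr hq0.le)
  have hf0 : 0 ≤ f 0 := Finset.sum_nonneg fun i _ => Real.rpow_nonneg (abs_nonneg _) _
  set C : ℝ := ‖b‖ with hC
  set R : ℝ := C + (f 0 + 1) ^ (1/q) with hR
  have hC0 : 0 ≤ C := norm_nonneg b
  have hR0 : 0 ≤ R := by positivity
  set K : Set (Fin n → ℝ) := ↑S ∩ Metric.closedBall 0 R with hK_def
  have hK : IsCompact K :=
    (isCompact_closedBall (0 : Fin n → ℝ) R).inter_left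
      (Submodule.closed_of_finiteDimensional S)
  have h0K : (0 : Fin n → ℝ) ∈ K :=
    ⟨S.zero_mem, Metric.mem_closedBall_self hR0⟩
  obtain ⟨v₀, hv₀K, hv₀min'⟩ := hK.exists_isMinOn ⟨0, h0K⟩ hf.continuousOn
  have hv₀min : ∀ v ∈ K, f v₀ ≤ f v := fun v hv => hv₀min' hv
  have hglobal : ∀ v ∈ S, f v₀ ≤ f v := by
    intro v hv
    by_cases hvR : ‖v‖ ≤ R
    · exact hv₀min v ⟨hv, by simpa [Metric.mem_closedBall, dist_zero_right] using hvR⟩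
    · push_neg at hvR
      have : ∃ i, R < |v i| := by
        by_contra h
        push_neg at h
        exact absurd ((pi_norm_le_iff_of_nonneg hR0).mpr fun i => h i) (not_le.mpr hvR)
      obtain ⟨i, hi⟩ := this
      have hbi : |b i| ≤ C := norm_le_pi_norm b i
      have h1 : (f 0 + 1) ^ (1/q) ≤ |v i - b i| := by
        have : |v i| - |b i| ≤ |v i - b i| := abs_sub_abs_le_abs_sub _ _
        have h2 : R - C < |v i| - |b i| := by
          have := hi; linarith [hbi]
        rw [hR] at h2
        linarith
      have h3 : f 0 + 1 ≤ |v i - b i| ^ q := by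
        calc f 0 + 1 = ((f 0 + 1) ^ (1/q)) ^ q := by
              rw [← Real.rpow_mul (by positivity), one_div,
                inv_mul_cancel₀ (ne_of_gt hq0), Real.rpow_one]
          _ ≤ |v i - b i| ^ q :=
              Real.rpow_le_rpow (by positivity) h1 hq0.le
      have h4 : |v i - b i| ^ q ≤ f v :=
        Finset.single_le_sum (f := fun i => |v i - b i| ^ q)
          (fun j _ => Real.rpow_nonneg (abs_nonneg _) _) (Finset.mem_univ i)
      have h5 : f v₀ ≤ f 0 := hv₀min 0 h0K
      linarith
  obtain ⟨x₀, hx₀⟩ := hv₀K.1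
  refine ⟨x₀, fun x => ?_⟩
  have h1 : ∀ x : Fin d → ℝ, (∑ i, |(A *ᵥ x - b) i| ^ q) = f (A *ᵥ x) := by
    intro x; simp [hf_def]
  rw [h1, h1]
  have : A *ᵥ x₀ = v₀ := hx₀
  rw [this]
  exact hglobal _ ⟨x, rfl⟩

theorem stmt19 {n d : ℕ} (A : Matrix (Fin n) (Fin d) ℝ) (b : Fin n → ℝ)
    (hb : b ∉ Set.range A.mulVec)
    (q : ℝ) (hq : 1 < q) (p : ℝ) (hp : p = q / (q - 1)) :
    (∃ x₀ : Fin d → ℝ, ∀ x : Fin d → ℝ,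
      (∑ i, |(A *ᵥ x₀ - b) i| ^ q) ^ (1/q) ≤ (∑ i, |(A *ᵥ x - b) i| ^ q) ^ (1/q)) ∧
    (∃ y₀ : Fin n → ℝ, (Aᵀ *ᵥ y₀ = 0 ∧ b ⬝ᵥ y₀ = 1) ∧
      ∀ y : Fin n → ℝ, Aᵀ *ᵥ y = 0 → b ⬝ᵥ y = 1 →
        (∑ i, |y₀ i| ^ p) ^ (1/p) ≤ (∑ i, |y i| ^ p) ^ (1/p)) ∧
    0 < sInf {t : ℝ | ∃ x : Fin d → ℝ, t = (∑ i, |(A *ᵥ x - b) i| ^ q) ^ (1/q)} ∧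
    0 < sInf {t : ℝ | ∃ y : Fin n → ℝ,
        Aᵀ *ᵥ y = 0 ∧ b ⬝ᵥ y = 1 ∧ t = (∑ i, |y i| ^ p) ^ (1/p)} ∧
    sInf {t : ℝ | ∃ x : Fin d → ℝ, t = (∑ i, |(A *ᵥ x - b) i| ^ q) ^ (1/q)} *
      sInf {t : ℝ | ∃ y : Fin n → ℝ,
        Aᵀ *ᵥ y = 0 ∧ b ⬝ᵥ y = 1 ∧ t = (∑ i, |y i| ^ p) ^ (1/p)} = 1 := by
  have hq0 : (0:ℝ) < q := by linarith
  have hq0' : q ≠ 0 := ne_of_gt hq0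
  have hqp : q.HolderConjugate p := (Real.holderConjugate_iff_eq_conjExponent hq).mpr hp
  have hp1 : 1 < p := hqp.symm.lt
  have hp0 : (0:ℝ) < p := by linarith
  obtain ⟨x₀, hx₀⟩ := stmt19_exists_min A b hq
  have hr : (A *ᵥ x₀ - b) ≠ 0 := by
    intro h
    exact hb ⟨x₀, by rwa [← sub_eq_zero]⟩
  have hM : 0 < ∑ i, |(A *ᵥ x₀ - b) i| ^ q := by
    obtain ⟨i, hi⟩ := Function.ne_iff.mp hr
    have h1 : 0 < |(A *ᵥ x₀ - b) i| ^ q := Real.rpow_pos_of_pos (abs_pos.mpr hi) q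
    have h2 : |(A *ᵥ x₀ - b) i| ^ q ≤ ∑ i, |(A *ᵥ x₀ - b) i| ^ q :=
      Finset.single_le_sum (f := fun i => |(A *ᵥ x₀ - b) i| ^ q)
        (fun j _ => Real.rpow_nonneg (abs_nonneg _) _) (Finset.mem_univ i)
    linarith
  set r : Fin n → ℝ := A *ᵥ x₀ - b with hr_def
  set M : ℝ := ∑ i, |r i| ^ q with hM_def
  set w : Fin n → ℝ := fun i => |r i| ^ (q - 2) * r i with hw_def
  have hw_abs : ∀ i, |w i| = |r i| ^ (q - 1) := by
    intro i
    rcases eq_or_ne (r i) 0 with h | h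
    · simp [hw_def, h, Real.zero_rpow (by linarith : q - 1 ≠ 0)]
    · rw [hw_def, abs_mul, abs_of_nonneg (Real.rpow_nonneg (abs_nonneg _) _),
        ← Real.rpow_add_one (abs_ne_zero.mpr h)]
      ring_nf
  have hw_r : ∀ i, w i * r i = |r i| ^ q := by
    intro i
    rcases eq_or_ne (r i) 0 with h | h
    · simp [hw_def, h, Real.zero_rpow hq0']
    · have : r i * r i = |r i| ^ (2:ℝ) := by
        rw [show ((2:ℝ)) = ((2:ℕ):ℝ) by norm_num, Real.rpow_natCast, sq_abs, sq]
      rw [hw_def, mul_assoc, this, ← Real.rpow_add (abs_pos.mpr h)]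
      ring_nf
  -- first-order condition
  have hAw : Aᵀ *ᵥ w = 0 := by
    funext j
    set c : Fin n → ℝ := fun i => A i j with hc_def
    set e : Fin d → ℝ := Pi.single j 1 with he_def
    set φ : ℝ → ℝ := fun t => ∑ i, |r i + t * c i| ^ q with hφ_def
    have hφeq : ∀ t : ℝ, φ t = ∑ i, |(A *ᵥ (x₀ + t • e) - b) i| ^ q := by
      intro t
      apply Finset.sum_congr rfl
      intro i _
      congr 1
      rw [he_def, Matrix.mulVec_add, Matrix.mulVec_smul, Matrix.mulVec_single]
      simp [hr_def, hc_def]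
      ring
    have hφmin : ∀ t : ℝ, φ 0 ≤ φ t := by
      intro t
      rw [hφeq t, hφeq 0]
      have h0 : x₀ + (0:ℝ) • e = x₀ := by simp
      rw [h0]
      exact hx₀ _
    have hφd : HasDerivAt φ (∑ i, q * |r i| ^ (q - 2) * r i * c i) 0 := by
      apply HasDerivAt.fun_sum
      intro i _
      have hinner : HasDerivAt (fun t : ℝ => r i + t * c i) (c i) 0 := by
        simpa using ((hasDerivAt_id (0:ℝ)).mul_const (c i)).const_add (r i)
      have houter : HasDerivAt (fun s : ℝ => |s| ^ q)
          (q * |r i + 0 * c i| ^ (q - 2) * (r i + 0 * c i)) (r i + 0 * c i) :=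
        hasDerivAt_abs_rpow _ hq
      have := houter.comp 0 hinner
      simpa [Function.comp_def, mul_assoc, mul_comm, mul_left_comm] using this
    have h0 : (∑ i, q * |r i| ^ (q - 2) * r i * c i) = 0 := by
      have hloc : IsLocalMin φ 0 := Filter.Eventually.of_forall hφmin
      exact hloc.hasDerivAt_eq_zero hφd
    have : (Aᵀ *ᵥ w) j = (1/q) * ∑ i, q * |r i| ^ (q - 2) * r i * c i := by
      rw [Finset.mul_sum]
      simp only [Matrix.mulVec, dotProduct, Matrix.transpose_apply]
      apply Finset.sum_congr rfl
      intro i _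
      rw [hw_def, hc_def]
      field_simp
    rw [this, h0, mul_zero]
    rfl
  have hAxw : ∀ y : Fin n → ℝ, Aᵀ *ᵥ y = 0 → (A *ᵥ x₀) ⬝ᵥ y = 0 := by
    intro y hy
    rw [dotProduct_comm, Matrix.dotProduct_mulVec, ← Matrix.mulVec_transpose, hy,
      zero_dotProduct]
  have hrw : r ⬝ᵥ w = M := by
    rw [dotProduct, hM_def]
    exact Finset.sum_congr rfl fun i _ => by rw [mul_comm]; exact hw_r i
  have hbw : b ⬝ᵥ w = -M := by
    have : b = A *ᵥ x₀ - r := by rw [hr_def]; ring_nf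
    rw [this, sub_dotProduct, hAxw w hAw, hrw]
    ring
  -- the dual optimal point
  set y₀ : Fin n → ℝ := (-(M⁻¹)) • w with hy₀_def
  have hy₀A : Aᵀ *ᵥ y₀ = 0 := by
    rw [hy₀_def, Matrix.mulVec_smul, hAw, smul_zero]
  have hy₀b : b ⬝ᵥ y₀ = 1 := by
    rw [hy₀_def, dotProduct_smul, hbw, smul_eq_mul]
    field_simp
  have hqexp : (q - 1) * p = q := hqp.sub_one_mul_conj
  have hy₀sum : ∑ i, |y₀ i| ^ p = M ^ (1 - p) := by
    have h1 : ∀ i, |y₀ i| ^ p = M ^ (-p) * |r i| ^ q := by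
      intro i
      have : |y₀ i| = M⁻¹ * |w i| := by
        rw [hy₀_def]
        simp [abs_mul, abs_of_pos hM, abs_inv]
      rw [this, hw_abs i, Real.mul_rpow (by positivity) (Real.rpow_nonneg (abs_nonneg _) _),
        ← Real.rpow_mul (abs_nonneg _), hqexp, Real.inv_rpow hM.le, ← Real.rpow_neg hM.le]
    rw [Finset.sum_congr rfl fun i _ => h1 i, ← Finset.mul_sum, ← hM_def]
    rw [show (1 - p) = -p + 1 by ring, Real.rpow_add hM, Real.rpow_one]
  have hy₀norm : (∑ i, |y₀ i| ^ p) ^ (1/p) = M ^ (-(1/q)) := by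
    rw [hy₀sum, ← Real.rpow_mul hM.le]
    congr 1
    have h := hqp.inv_add_inv_eq_one
    field_simp
    field_simp at h
    nlinarith [h]
  -- Hölder lower bound for dual feasible points
  have hdual : ∀ y : Fin n → ℝ, Aᵀ *ᵥ y = 0 → b ⬝ᵥ y = 1 →
      M ^ (-(1/q)) ≤ (∑ i, |y i| ^ p) ^ (1/p) := by
    intro y hyA hyb
    have h1 : (1:ℝ) = ∑ i, (-(r i)) * y i := by
      have hb' : b = A *ᵥ x₀ - r := by rw [hr_def]; ring_nf
      have : b ⬝ᵥ y = (A *ᵥ x₀) ⬝ᵥ y - r ⬝ᵥ y := by rw [hb', sub_dotProduct]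
      rw [hyb, hAxw y hyA] at this
      have : (1:ℝ) = - (r ⬝ᵥ y) := by linarith [this.symm]
      rw [this, dotProduct, ← Finset.sum_neg_distrib]
      exact Finset.sum_congr rfl fun i _ => by ring
    have h2 := Real.inner_le_Lp_mul_Lq Finset.univ (fun i => -(r i)) y hqp
    simp only [abs_neg] at h2
    rw [← h1, ← hM_def] at h2
    have hpos : 0 < M ^ (1/q) := Real.rpow_pos_of_pos hM _
    rw [Real.rpow_neg hM.le, inv_eq_one_div, div_le_iff₀ hpos]
    calc (1:ℝ) ≤ M ^ (1/q) * (∑ i, |y i| ^ p) ^ (1/p) := h2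
      _ = (∑ i, |y i| ^ p) ^ (1/p) * M ^ (1/q) := by ring
  -- assemble
  have hm₁mem : ∀ x : Fin d → ℝ, M ^ (1/q) ≤ (∑ i, |(A *ᵥ x - b) i| ^ q) ^ (1/q) := by
    intro x
    rw [hM_def]
    exact Real.rpow_le_rpow (Finset.sum_nonneg fun i _ => Real.rpow_nonneg (abs_nonneg _) _)
      (by rw [hr_def]; exact hx₀ x) (by positivity)
  have hm₁eq : (∑ i, |(A *ᵥ x₀ - b) i| ^ q) ^ (1/q) = M ^ (1/q) := by rw [hM_def, hr_def]
  have hT1 : sInf {t : ℝ | ∃ x : Fin d → ℝ, t = (∑ i, |(A *ᵥ x - b) i| ^ q) ^ (1/q)}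
      = M ^ (1/q) := by
    apply le_antisymm
    · exact csInf_le ⟨M ^ (1/q), fun t ⟨x, hx⟩ => hx ▸ hm₁mem x⟩ ⟨x₀, hm₁eq.symm⟩
    · exact le_csInf ⟨_, x₀, hm₁eq.symm⟩ fun t ⟨x, hx⟩ => hx ▸ hm₁mem x
  have hT2 : sInf {t : ℝ | ∃ y : Fin n → ℝ,
      Aᵀ *ᵥ y = 0 ∧ b ⬝ᵥ y = 1 ∧ t = (∑ i, |y i| ^ p) ^ (1/p)} = M ^ (-(1/q)) := by
    apply le_antisymm
    · exact csInf_le ⟨M ^ (-(1/q)), fun t ⟨y, hyA, hyb, hy⟩ => hy ▸ hdual y hyA hyb⟩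
        ⟨y₀, hy₀A, hy₀b, hy₀norm.symm⟩
    · exact le_csInf ⟨_, y₀, hy₀A, hy₀b, hy₀norm.symm⟩
        fun t ⟨y, hyA, hyb, hy⟩ => hy ▸ hdual y hyA hyb
  refine ⟨⟨x₀, fun x => hm₁eq ▸ hm₁mem x⟩,
    ⟨y₀, ⟨hy₀A, hy₀b⟩, fun y hyA hyb => hy₀norm ▸ hdual y hyA hyb⟩,
    ?_, ?_, ?_⟩
  · rw [hT1]; exact Real.rpow_pos_of_pos hM _
  · rw [hT2]; exact Real.rpow_pos_of_pos hM _
  · rw [hT1, hT2, ← Real.rpow_add hM]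
    norm_num
end
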